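/- Nondeterministic merge of partial recursive functions: if f, g : α →. σ are partial recursive, then there is a partial recursive h : α →. σ such that for every a, h a is defined iff f a is defined or g a is defined, and every value of h a is a value of f a or of g a. -/
import Mathlib
theorem partrec_merge {α σ : Type*} [Primcodable α] [Primcodable σ]
    {f g : α →. σ} (hf : Partrec f) (hg : Partrec g) :
    ∃ h : α →. σ, Partrec h ∧ (∀ a, (h a).Dom ↔ (f a).Dom ∨ (g a).Dom) ∧
      ∀ a x, x ∈ h a → x ∈ f a ∨ x ∈ g a := by
  obtain ⟨k, hk, H⟩ := Partrec.merge' hf hg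
  exact ⟨k, hk, fun a => (H a).2, fun a => (H a).1⟩
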